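/- Let G be a non-degenerate central extension of k^× by a finite abelian group K. Then there are subgroups K₁, K₂ of K with K = K₁ ⊕ K₂, the commutator form trivial on each Kᵢ, the pairing ⟨-,-⟩ : K₁ × K₂ → k^×, (x₁,x₂) ↦ [x₁,x₂]_G, non-degenerate, and G is equivalent (as a central extension of k^× by K) to the group G_⟨-,-⟩ with underlying set k^× × K₁ × K₂ and multiplication (α,x₁,x₂)·(β,y₁,y₂) = (αβ⟨x₁,y₂⟩, x₁+y₁, x₂+y₂). -/

import Mathlib

open scoped commutatorElement

section Bilin
variable {k : Type} [Field k] {K : Type} [CommGroup K] {c : K → K → kˣ}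

theorem c_one_left (hl : ∀ x y z : K, c (x * y) z = c x z * c y z) (z : K) : c 1 z = 1 := by
  have h := hl 1 1 z; rw [one_mul] at h; exact (left_eq_mul.mp h)

theorem c_one_right (hr : ∀ x y z : K, c x (y * z) = c x y * c x z) (x : K) : c x 1 = 1 := by
  have h := hr x 1 1; rw [one_mul] at h; exact (left_eq_mul.mp h)

theorem c_inv_left (hl : ∀ x y z : K, c (x * y) z = c x z * c y z) (x z : K) :
    c x⁻¹ z = (c x z)⁻¹ := by
  have h := hl x⁻¹ x z; rw [inv_mul_cancel, c_one_left hl] at h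
  exact eq_inv_of_mul_eq_one_left h.symm

theorem c_inv_right (hr : ∀ x y z : K, c x (y * z) = c x y * c x z) (x z : K) :
    c x z⁻¹ = (c x z)⁻¹ := by
  have h := hr x z⁻¹ z; rw [inv_mul_cancel, c_one_right hr] at h
  exact eq_inv_of_mul_eq_one_left h.symm

theorem c_pow_left (hl : ∀ x y z : K, c (x * y) z = c x z * c y z) (x z : K) (m : ℕ) :
    c (x ^ m) z = c x z ^ m := by
  induction m with
  | zero => simpa using c_one_left hl z
  | succ m ih => rw [pow_succ, hl, ih, pow_succ]

theorem c_pow_right (hr : ∀ x y z : K, c x (y * z) = c x y * c x z) (x z : K) (m : ℕ) :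
    c x (z ^ m) = c x z ^ m := by
  induction m with
  | zero => simpa using c_one_right hr x
  | succ m ih => rw [pow_succ, hr, ih, pow_succ]

theorem c_zpow_left (hl : ∀ x y z : K, c (x * y) z = c x z * c y z) (x z : K) (m : ℤ) :
    c (x ^ m) z = c x z ^ m := by
  cases m with
  | ofNat m => simpa using c_pow_left hl x z m
  | negSucc m => rw [zpow_negSucc, zpow_negSucc, c_inv_left hl, c_pow_left hl]

theorem c_zpow_right (hr : ∀ x y z : K, c x (y * z) = c x y * c x z) (x z : K) (m : ℤ) :
    c x (z ^ m) = c x z ^ m := by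
  cases m with
  | ofNat m => simpa using c_pow_right hr x z m
  | negSucc m => rw [zpow_negSucc, zpow_negSucc, c_inv_right hr, c_pow_right hr]

theorem c_antisymm (hl : ∀ x y z : K, c (x * y) z = c x z * c y z)
    (hr : ∀ x y z : K, c x (y * z) = c x y * c x z)
    (halt : ∀ x : K, c x x = 1) (x y : K) : c y x = (c x y)⁻¹ := by
  have h : c (x * y) (x * y) = 1 := halt _
  rw [hl, hr, hr, halt, halt, one_mul, mul_one] at h
  exact eq_inv_of_mul_eq_one_left (by rw [mul_comm] at h; exact h)

end Bilin

open Subgroup in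
theorem symp_decomp {k : Type} [Field k] :
    ∀ (N : ℕ) (K : Type) [CommGroup K] [Finite K] (c : K → K → kˣ),
    Nat.card K ≤ N →
    (∀ x y z : K, c (x * y) z = c x z * c y z) →
    (∀ x y z : K, c x (y * z) = c x y * c x z) →
    (∀ x : K, c x x = 1) →
    (∀ x : K, (∀ y, c x y = 1) → x = 1) →
    ∃ K₁ K₂ : Subgroup K, IsCompl K₁ K₂ ∧
      (∀ x ∈ K₁, ∀ y ∈ K₁, c x y = 1) ∧ (∀ x ∈ K₂, ∀ y ∈ K₂, c x y = 1) := by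
  intro N
  induction N with
  | zero =>
    intro K _ _ c hcard _ _ _ _
    exact absurd hcard (by have : 0 < Nat.card K := Nat.card_pos; omega)
  | succ N ih =>
    intro K _ _ c hcard hl hr halt hnd
    by_cases hK : Nat.card K = 1
    · -- trivial group case
      have hbt : (⊥ : Subgroup K) = ⊤ := by
        apply Subgroup.eq_top_of_card_eq
        simp [hK]
      refine ⟨⊥, ⊥, ⟨disjoint_bot_left, by rw [codisjoint_iff, sup_idem]; exact hbt⟩, ?_, ?_⟩ <;>
      · rintro x hx y hy
        rw [Subgroup.mem_bot] at hx hy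
        subst hx; subst hy
        exact c_one_left hl 1
    · -- nontrivial case
      have hpos : 0 < Nat.card K := Nat.card_pos
      have hnontriv : Nontrivial K := Finite.one_lt_card_iff_nontrivial.mp (by omega)
      have hee : Monoid.ExponentExists K := Monoid.ExponentExists.of_finite
      obtain ⟨x, hx⟩ := Monoid.exists_orderOf_eq_exponent hee
      set n := Monoid.exponent K with hn
      have hn1 : 1 < n := Monoid.one_lt_exponent
      -- the homomorphism c x -
      let ch : K →* kˣ :=
        { toFun := fun y => c x y
          map_one' := c_one_right hr x
          map_mul' := fun a b => hr x a b }
      haveI : Finite ch.range := Finite.of_surjective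
        (fun y : K => (⟨ch y, ⟨y, rfl⟩⟩ : ch.range))
        (by rintro ⟨u, y, rfl⟩; exact ⟨y, rfl⟩)
      have heer : Monoid.ExponentExists ch.range := Monoid.ExponentExists.of_finite
      obtain ⟨y₀, hy₀⟩ := Monoid.exists_orderOf_eq_exponent heer
      set d := Monoid.exponent ch.range with hd
      have hpown : ∀ z : K, z ^ n = 1 := fun z => by rw [hn]; exact Monoid.pow_exponent_eq_one z
      -- d = n
      have hdn : d ∣ n := by
        rw [hd]
        apply Monoid.exponent_dvd_of_forall_pow_eq_one
        rintro ⟨u, y, rfl⟩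
        have h1 : (ch y) ^ n = 1 := by
          show (c x y) ^ n = 1
          rw [← c_pow_right hr, hpown, c_one_right hr]
        exact Subtype.ext (by rw [SubmonoidClass.coe_pow]; exact h1)
      have hnd' : n ∣ d := by
        rw [← hx]
        apply orderOf_dvd_of_pow_eq_one
        apply hnd
        intro y
        rw [c_pow_left hl]
        have h2 : ((⟨ch y, ⟨y, rfl⟩⟩ : ch.range)) ^ d = 1 := by
          rw [hd]; exact Monoid.pow_exponent_eq_one _
        have h3 := congrArg (Subtype.val) h2
        rw [SubmonoidClass.coe_pow] at h3
        exact h3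
      have hdeq : d = n := Nat.dvd_antisymm hdn hnd'
      obtain ⟨y, hy⟩ : ∃ y : K, c x y = (y₀ : kˣ) := by
        obtain ⟨y, hy⟩ := y₀.2
        exact ⟨y, by rw [← hy]; rfl⟩
      set ζ := c x y with hζdef
      have hζ : orderOf ζ = n := by
        rw [hy, ← hdeq, ← hy₀]
        exact orderOf_injective ch.range.subtype Subtype.coe_injective y₀
      have hζn : ζ ^ n = 1 := by rw [← hζ]; exact pow_orderOf_eq_one ζ
      -- all n-th roots of unity are powers of ζ
      have hroot : ∀ β : kˣ, β ^ n = 1 → β ∈ Subgroup.zpowers ζ := by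
        intro β hβ
        have hle : Subgroup.zpowers ζ ≤ rootsOfUnity n k := by
          rintro u ⟨m, rfl⟩
          rw [mem_rootsOfUnity, ← zpow_natCast, ← zpow_mul, mul_comm, zpow_mul, zpow_natCast,
            hζn, one_zpow]
        haveI : NeZero n := ⟨by omega⟩
        have hcard1 : Nat.card (rootsOfUnity n k) ≤ n := by
          exact card_rootsOfUnity k n
        have hcard2 : Nat.card (Subgroup.zpowers ζ) = n := by rw [Nat.card_zpowers, hζ]
        have heq : Subgroup.zpowers ζ = rootsOfUnity n k :=
          Subgroup.eq_of_le_of_card_ge hle (by omega)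
        rw [heq]
        exact (mem_rootsOfUnity n β).mpr hβ
      -- the orthogonal complement W of x and y
      let W : Subgroup K :=
        { carrier := {z | c z x = 1 ∧ c z y = 1}
          one_mem' := ⟨c_one_left hl x, c_one_left hl y⟩
          mul_mem' := by
            rintro a b ⟨ha1, ha2⟩ ⟨hb1, hb2⟩
            exact ⟨by rw [hl, ha1, hb1, one_mul], by rw [hl, ha2, hb2, one_mul]⟩
          inv_mem' := by
            rintro a ⟨ha1, ha2⟩
            exact ⟨by rw [c_inv_left hl, ha1, inv_one], by rw [c_inv_left hl, ha2, inv_one]⟩ }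
      have hWmem : ∀ z : K, z ∈ W ↔ c z x = 1 ∧ c z y = 1 := fun z => Iff.rfl
      have hyx : c y x = ζ⁻¹ := c_antisymm hl hr halt x y
      -- decomposition of any element
      have hdec : ∀ u : K, ∃ (a b : ℤ) (w : K), w ∈ W ∧ u = x ^ a * y ^ b * w := by
        intro u
        have h1 : (c u y) ^ n = 1 := by
          rw [← c_pow_left hl, hpown, c_one_left hl]
        have h2 : ((c u x)⁻¹) ^ n = 1 := by
          rw [inv_pow, ← c_pow_left hl, hpown, c_one_left hl, inv_one]
        obtain ⟨a, ha⟩ := Subgroup.mem_zpowers_iff.mp (hroot _ h1)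
        obtain ⟨b, hb⟩ := Subgroup.mem_zpowers_iff.mp (hroot _ h2)
        refine ⟨a, b, (x ^ a * y ^ b)⁻¹ * u, ⟨?_, ?_⟩, by group⟩
        · rw [hl, c_inv_left hl, hl, c_zpow_left hl, c_zpow_left hl, halt, hyx]
          simp only [one_zpow, one_mul, inv_zpow, inv_inv]
          rw [hb]
          exact inv_mul_cancel _
        · rw [hl, c_inv_left hl, hl, c_zpow_left hl, c_zpow_left hl, halt, ← hζdef, ← ha]
          simp only [one_zpow, mul_one]
          exact inv_mul_cancel _
      -- W is a proper subgroup
      have hxnW : x ∉ W := by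
        intro hxW
        have := (hWmem x).mp hxW |>.2
        rw [hζdef] at hζ
        rw [this] at hζ
        simp only [orderOf_one] at hζ
        omega
      have hcardW : Nat.card W ≤ N := by
        have h1 : Nat.card W ∣ Nat.card K := Subgroup.card_subgroup_dvd_card W
        have h2 : Nat.card W ≠ Nat.card K := by
          intro h
          exact hxnW ((Subgroup.eq_top_of_card_eq W h) ▸ Subgroup.mem_top x)
        have h3 : 0 < Nat.card W := Nat.card_pos
        have := Nat.le_of_dvd hpos h1
        omega
      -- restricted pairing
      set c' : W → W → kˣ := fun a b => c (a : K) (b : K) with hc'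
      have hl' : ∀ a b z : W, c' (a * b) z = c' a z * c' b z := fun a b z => hl a b z
      have hr' : ∀ a b z : W, c' a (b * z) = c' a b * c' a z := fun a b z => hr a b z
      have halt' : ∀ a : W, c' a a = 1 := fun a => halt a
      have hnd'' : ∀ z : W, (∀ w : W, c' z w = 1) → z = 1 := by
        intro z hz
        have : (z : K) = 1 := by
          apply hnd
          intro u
          obtain ⟨a, b, w, hw, rfl⟩ := hdec u
          rw [hr, hr, c_zpow_right hr, c_zpow_right hr]
          have hzx : c (z : K) x = 1 := ((hWmem z).mp z.2).1
          have hzy : c (z : K) y = 1 := ((hWmem z).mp z.2).2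
          rw [hzx, hzy, one_zpow, one_zpow, one_mul, one_mul]
          exact hz ⟨w, hw⟩
        exact Subtype.ext this
      obtain ⟨W₁, W₂, hWc, hW₁, hW₂⟩ := ih ↥W c' hcardW hl' hr' halt' hnd''
      -- build the answer
      have hx_w : ∀ w ∈ W, c x w = 1 := fun w hw => by
        rw [c_antisymm hl hr halt w x, ((hWmem w).mp hw).1, inv_one]
      have hy_w : ∀ w ∈ W, c y w = 1 := fun w hw => by
        rw [c_antisymm hl hr halt w y, ((hWmem w).mp hw).2, inv_one]
      refine ⟨Subgroup.zpowers x ⊔ W₁.map W.subtype, Subgroup.zpowers y ⊔ W₂.map W.subtype,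
        ?_, ?_, ?_⟩
      · constructor
        · -- disjoint
          rw [Subgroup.disjoint_def]
          rintro u hu₁ hu₂
          rw [Subgroup.mem_sup] at hu₁ hu₂
          obtain ⟨p, hp, _, ⟨w₁, hw₁, rfl⟩, rfl⟩ := hu₁
          obtain ⟨a, rfl⟩ := Subgroup.mem_zpowers_iff.mp hp
          obtain ⟨q, hq, _, ⟨w₂, hw₂, rfl⟩, hk2⟩ := hu₂
          obtain ⟨b, rfl⟩ := Subgroup.mem_zpowers_iff.mp hq
          simp only [Subgroup.coe_subtype] at hk2 ⊢
          -- hk2 : y ^ b * ↑w₂ = x ^ a * ↑w₁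
          have c1 : c (x ^ a * (w₁ : K)) y = ζ ^ a := by
            rw [hl, c_zpow_left hl, ← hζdef, ((hWmem _).mp w₁.2).2, mul_one]
          have c2 : c (y ^ b * (w₂ : K)) y = 1 := by
            rw [hl, c_zpow_left hl, halt, one_zpow, one_mul, ((hWmem _).mp w₂.2).2]
          have c3 : c (x ^ a * (w₁ : K)) x = 1 := by
            rw [hl, c_zpow_left hl, halt, one_zpow, one_mul, ((hWmem _).mp w₁.2).1]
          have c4 : c (y ^ b * (w₂ : K)) x = ζ⁻¹ ^ b := by
            rw [hl, c_zpow_left hl, hyx, ((hWmem _).mp w₂.2).1, mul_one]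
          have hζa : ζ ^ a = 1 := by rw [← c1, ← hk2]; exact c2
          have hζb : ζ ^ b = 1 := by
            have h4 := c4
            rw [hk2, c3, inv_zpow] at h4
            exact inv_eq_one.mp h4.symm
          have hxa : x ^ a = 1 := by
            have h5 : ((orderOf x : ℕ) : ℤ) ∣ a := by
              rw [hx, ← hζ]; exact orderOf_dvd_iff_zpow_eq_one.mpr hζa
            exact orderOf_dvd_iff_zpow_eq_one.mp h5
          have hyb : y ^ b = 1 := by
            have h5 : ((n : ℕ) : ℤ) ∣ b := by
              rw [← hζ]; exact orderOf_dvd_iff_zpow_eq_one.mpr hζb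
            have h6 : ((orderOf y : ℕ) : ℤ) ∣ b :=
              dvd_trans (Int.natCast_dvd_natCast.mpr (Monoid.order_dvd_exponent y)) h5
            exact orderOf_dvd_iff_zpow_eq_one.mp h6
          have hw12 : (w₂ : K) = (w₁ : K) := by
            rw [hyb, one_mul, hxa, one_mul] at hk2; exact hk2
          have hw12' : w₂ = w₁ := Subtype.coe_injective hw12
          have hw1one : w₁ = 1 := Subgroup.disjoint_def.mp hWc.disjoint hw₁ (hw12' ▸ hw₂)
          rw [hxa, one_mul, hw1one]
          rfl
        · -- codisjoint
          rw [codisjoint_iff, Subgroup.eq_top_iff']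
          intro u
          obtain ⟨a, b, w, hw, rfl⟩ := hdec u
          have hw' : (⟨w, hw⟩ : W) ∈ W₁ ⊔ W₂ := by
            rw [codisjoint_iff.mp hWc.codisjoint]; exact Subgroup.mem_top _
          rw [Subgroup.mem_sup] at hw'
          obtain ⟨w₁, hw₁, w₂, hw₂, hww⟩ := hw'
          have hwK : (w₁ : K) * (w₂ : K) = w := congrArg Subtype.val hww
          have h1 : (w₁ : K) ∈ W₁.map W.subtype := ⟨w₁, hw₁, rfl⟩
          have h2 : (w₂ : K) ∈ W₂.map W.subtype := ⟨w₂, hw₂, rfl⟩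
          refine mul_mem (mul_mem ?_ ?_) ?_
          · exact Subgroup.mem_sup_left (Subgroup.mem_sup_left (Subgroup.zpow_mem _
              (Subgroup.mem_zpowers x) a))
          · exact Subgroup.mem_sup_right (Subgroup.mem_sup_left (Subgroup.zpow_mem _
              (Subgroup.mem_zpowers y) b))
          · rw [← hwK]
            exact mul_mem (Subgroup.mem_sup_left (Subgroup.mem_sup_right h1))
              (Subgroup.mem_sup_right (Subgroup.mem_sup_right h2))
      · -- isotropy of K₁
        rintro u hu v hv
        rw [Subgroup.mem_sup] at hu hv
        obtain ⟨p, hp, _, ⟨w₁, hw₁, rfl⟩, rfl⟩ := hu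
        obtain ⟨a, rfl⟩ := Subgroup.mem_zpowers_iff.mp hp
        obtain ⟨q, hq, _, ⟨w₂, hw₂, rfl⟩, rfl⟩ := hv
        obtain ⟨b, rfl⟩ := Subgroup.mem_zpowers_iff.mp hq
        simp only [Subgroup.coe_subtype]
        have e1 : c (x ^ a) (x ^ b * (w₂ : K)) = 1 := by
          rw [c_zpow_left hl, hr, c_zpow_right hr, halt, one_zpow, one_mul,
            hx_w _ w₂.2, one_zpow]
        have e2 : c (w₁ : K) (x ^ b * (w₂ : K)) = 1 := by
          rw [hr, c_zpow_right hr, ((hWmem _).mp w₁.2).1, one_zpow, one_mul]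
          exact hW₁ w₁ hw₁ w₂ hw₂
        rw [hl, e1, e2, one_mul]
      · -- isotropy of K₂
        rintro u hu v hv
        rw [Subgroup.mem_sup] at hu hv
        obtain ⟨p, hp, _, ⟨w₁, hw₁, rfl⟩, rfl⟩ := hu
        obtain ⟨a, rfl⟩ := Subgroup.mem_zpowers_iff.mp hp
        obtain ⟨q, hq, _, ⟨w₂, hw₂, rfl⟩, rfl⟩ := hv
        obtain ⟨b, rfl⟩ := Subgroup.mem_zpowers_iff.mp hq
        simp only [Subgroup.coe_subtype]
        have e1 : c (y ^ a) (y ^ b * (w₂ : K)) = 1 := by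
          rw [c_zpow_left hl, hr, c_zpow_right hr, halt, one_zpow, one_mul,
            hy_w _ w₂.2, one_zpow]
        have e2 : c (w₁ : K) (y ^ b * (w₂ : K)) = 1 := by
          rw [hr, c_zpow_right hr, ((hWmem _).mp w₁.2).2, one_zpow, one_mul]
          exact hW₂ w₁ hw₁ w₂ hw₂
        rw [hl, e1, e2, one_mul]


-- root extraction in kˣ
theorem units_root {k : Type} [Field k] [IsAlgClosed k] (α : kˣ) {m : ℕ} (hm : 0 < m) :
    ∃ β : kˣ, β ^ m = α := by
  obtain ⟨z, hz⟩ := IsAlgClosed.exists_pow_nat_eq (α : k) hm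
  have hz0 : z ≠ 0 := by
    intro h
    rw [h, zero_pow hm.ne'] at hz
    exact (Units.ne_zero α) hz.symm
  refine ⟨Units.mk0 z hz0, ?_⟩
  ext
  push_cast
  exact hz

theorem exists_hom_section {k : Type} [Field k] [IsAlgClosed k] {K : Type} [CommGroup K]
    [Finite K] {G : Type} [Group G] (ι : kˣ →* G) (π : G →* K)
    (hsurj : Function.Surjective π) (hexact : π.ker = ι.range)
    (hcent : ∀ (α : kˣ) (g : G), Commute (ι α) g)
    (c : K → K → kˣ) (hc : ∀ a b : G, ι (c (π a) (π b)) = ⁅a, b⁆)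
    (Q : Subgroup K) (hQ : ∀ x ∈ Q, ∀ y ∈ Q, c x y = 1) :
    ∃ s : Q →* G, ∀ q : Q, π (s q) = (q : K) := by
  classical
  obtain ⟨I, hfin, n, hn, ⟨φ⟩⟩ := CommGroup.equiv_prod_multiplicative_zmod_of_finite Q
  haveI := hfin
  haveI : ∀ i, NeZero (n i) := fun i => ⟨by have := hn i; omega⟩
  set g : ∀ i : I, Q := fun i => φ.symm (Pi.mulSingle i (Multiplicative.ofAdd 1)) with hgdef
  -- choose lifts
  have hlift : ∀ i, ∃ a : G, π a = ((g i : Q) : K) := fun i => hsurj _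
  choose a ha using hlift
  -- order of g i divides n i
  have hgord : ∀ i, (g i) ^ (n i) = 1 := by
    intro i
    have h1 : (Multiplicative.ofAdd (1 : ZMod (n i))) ^ (n i) = 1 := by
      rw [← ofAdd_nsmul]
      simp [nsmul_eq_mul]
    have h2 : (Pi.mulSingle i (Multiplicative.ofAdd (1 : ZMod (n i)))) ^ (n i)
        = (1 : ∀ j, Multiplicative (ZMod (n j))) := by
      rw [← Pi.mulSingle_pow, h1, Pi.mulSingle_one]
    show (φ.symm (Pi.mulSingle i (Multiplicative.ofAdd 1))) ^ (n i) = 1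
    rw [← map_pow, h2, map_one]
  -- correct the lifts to have finite order
  have hker : ∀ i, (a i) ^ (n i) ∈ ι.range := by
    intro i
    rw [← hexact, MonoidHom.mem_ker, map_pow, ha]
    rw [← Subgroup.coe_pow, hgord i, OneMemClass.coe_one]
  have halpha : ∀ i, ∃ α : kˣ, ι α = (a i) ^ (n i) := fun i => (hker i)
  choose α hα using halpha
  have hbeta : ∀ i, ∃ β : kˣ, β ^ (n i) = α i := fun i =>
    units_root (α i) (by have := hn i; omega)
  choose β hβ using hbeta
  set b : I → G := fun i => a i * (ι (β i))⁻¹ with hbdef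
  have hπb : ∀ i, π (b i) = ((g i : Q) : K) := by
    intro i
    have h1 : ι (β i) ∈ π.ker := by rw [hexact]; exact ⟨β i, rfl⟩
    rw [hbdef]
    simp only
    rw [map_mul, map_inv, MonoidHom.mem_ker.mp h1, inv_one, mul_one, ha]
  have hbord : ∀ i, (b i) ^ (n i) = 1 := by
    intro i
    have h3 : ((ι (β i))⁻¹) ^ (n i) = ((a i) ^ (n i))⁻¹ := by
      rw [inv_pow, ← map_pow, hβ, hα]
    show (a i * (ι (β i))⁻¹) ^ (n i) = 1
    rw [((hcent (β i) (a i)).symm.inv_right).mul_pow, h3, mul_inv_cancel]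
  have hbcomm : ∀ i j, Commute (b i) (b j) := by
    intro i j
    rw [← commutatorElement_eq_one_iff_commute, ← hc (b i) (b j), hπb, hπb,
      hQ _ (g i).2 _ (g j).2, map_one]
  set v : (∀ i, Multiplicative (ZMod (n i))) → I → ℕ :=
    fun f i => (Multiplicative.toAdd (f i)).val with hvdef
  have hcomm : ∀ (fn : I → ℕ),
      (↑(Finset.univ : Finset I) : Set I).Pairwise
        (Function.onFun Commute fun i => b i ^ fn i) :=
    fun fn i _ j _ _ => ((hbcomm i j).pow_pow _ _)
  set ψ : (∀ i, Multiplicative (ZMod (n i))) → G :=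
    fun f => Finset.univ.noncommProd (fun i => b i ^ v f i) (hcomm (v f)) with hψdef
  have hψmul : ∀ f f', ψ (f * f') = ψ f * ψ f' := by
    intro f f'
    show Finset.univ.noncommProd (fun i => b i ^ v (f * f') i) (hcomm _)
      = Finset.univ.noncommProd (fun i => b i ^ v f i) (hcomm _)
        * Finset.univ.noncommProd (fun i => b i ^ v f' i) (hcomm _)
    have hkey : ∀ i, b i ^ v (f * f') i = b i ^ v f i * b i ^ v f' i := by
      intro i
      have h1 : v (f * f') i = (v f i + v f' i) % n i := by
        show (Multiplicative.toAdd (f i * f' i)).val = _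
        rw [toAdd_mul]
        exact ZMod.val_add _ _
      rw [h1, ← pow_add]
      apply (pow_eq_pow_iff_modEq).mpr
      exact (Nat.mod_modEq _ _).of_dvd (orderOf_dvd_of_pow_eq_one (hbord i))
    have hgf : (↑(Finset.univ : Finset I) : Set I).Pairwise
        fun x y => Commute (b x ^ v f' x) (b y ^ v f y) :=
      fun i _ j _ _ => ((hbcomm i j).pow_pow _ _)
    calc Finset.univ.noncommProd (fun i => b i ^ v (f * f') i) (hcomm _)
        = Finset.univ.noncommProd
            ((fun i => b i ^ v f i) * (fun i => b i ^ v f' i))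
            (Finset.noncommProd_mul_distrib_aux (hcomm (v f)) (hcomm (v f')) hgf) :=
          Finset.noncommProd_congr rfl (fun i _ => hkey i) _
      _ = _ := Finset.noncommProd_mul_distrib _ _ (hcomm (v f)) (hcomm (v f')) hgf
  have hψπ : ∀ f, π (ψ f) = ((φ.symm f : Q) : K) := by
    intro f
    have hprod : (∏ i, (g i) ^ (v f i)) = φ.symm f := by
      apply φ.injective
      rw [map_prod, MulEquiv.apply_symm_apply]
      have hterm : ∀ i, φ ((g i) ^ (v f i)) = Pi.mulSingle i (f i) := by
        intro i
        rw [map_pow]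
        show (φ (φ.symm (Pi.mulSingle i (Multiplicative.ofAdd 1)))) ^ (v f i) = _
        rw [MulEquiv.apply_symm_apply, ← Pi.mulSingle_pow, ← ofAdd_nsmul]
        have h6 : (v f i) • (1 : ZMod (n i)) = Multiplicative.toAdd (f i) := by
          rw [nsmul_eq_mul, mul_one]
          exact ZMod.natCast_rightInverse _
        rw [h6]
        simp
      rw [Finset.prod_congr rfl (fun i _ => hterm i)]
      exact Finset.univ_prod_mulSingle f
    show π (Finset.univ.noncommProd (fun i => b i ^ v f i) (hcomm (v f))) = ((φ.symm f : Q) : K)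
    rw [Finset.map_noncommProd]
    have h8 : Finset.univ.noncommProd (fun i => π (b i ^ v f i))
        (fun x _ y _ _ => Commute.all _ _) = ∏ i, π (b i ^ v f i) :=
      Finset.noncommProd_eq_prod _ _
    rw [h8, ← hprod]
    rw [show ((∏ i, (g i) ^ (v f i) : Q) : K) = Q.subtype (∏ i, (g i) ^ (v f i)) from rfl,
      map_prod]
    apply Finset.prod_congr rfl
    intro i _
    simp [map_pow, hπb, Subgroup.coe_subtype]
  refine ⟨{ toFun := fun q => ψ (φ q)
            map_one' := by
              have h := hψmul 1 1
              rw [mul_one] at h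
              show ψ (φ 1) = 1
              rw [map_one]
              exact left_eq_mul.mp h
            map_mul' := fun q q' => by
              show ψ (φ (q * q')) = ψ (φ q) * ψ (φ q')
              rw [map_mul]
              exact hψmul _ _ }, ?_⟩
  intro q
  show π (ψ (φ q)) = (q : K)
  rw [hψπ, MulEquiv.symm_apply_apply]

/-- Let `G` be a non-degenerate central extension of `kˣ` by a finite abelian
group `K` (`char k ∤ |K|`, `k` algebraically closed), with commutator form `c` (so that
`ι (c (π a) (π b)) = ⁅a,b⁆`).  Then there are subgroups `K₁, K₂` with `K = K₁ ⊕ K₂`, the form `c`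
trivial on each `Kᵢ`, the pairing `K₁ × K₂ → kˣ`, `(x₁,x₂) ↦ c x₁ x₂`, non-degenerate, and `G` is
equivalent, as a central extension of `kˣ` by `K`, to the group `kˣ × K₁ × K₂` with multiplication
`(α,x₁,x₂)·(β,y₁,y₂) = (αβ⟨x₁,y₂⟩, x₁y₁, x₂y₂)`: there is a bijection `e : G ≃ kˣ × K₁ × K₂`
transporting the multiplication of `G` to this multiplication, sending `ι α` to `(α,1,1)` and
commuting with the projections to `K`. -/
theorem stmt4 {k : Type} [Field k] [IsAlgClosed k] {K : Type} [CommGroup K] [Finite K]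
    {G : Type} [Group G]
    (hchar : ¬ (ringChar k ∣ Nat.card K))
    (ι : kˣ →* G) (π : G →* K)
    (hinj : Function.Injective ι) (hsurj : Function.Surjective π)
    (hexact : π.ker = ι.range)
    (hnondeg : ι.range = Subgroup.center G)
    (c : K → K → kˣ)
    (hc : ∀ a b : G, ι (c (π a) (π b)) = ⁅a, b⁆) :
    ∃ K₁ K₂ : Subgroup K,
      IsCompl K₁ K₂ ∧
      (∀ x ∈ K₁, ∀ y ∈ K₁, c x y = 1) ∧
      (∀ x ∈ K₂, ∀ y ∈ K₂, c x y = 1) ∧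
      (∀ x ∈ K₁, (∀ y ∈ K₂, c x y = 1) → x = 1) ∧
      (∀ y ∈ K₂, (∀ x ∈ K₁, c x y = 1) → y = 1) ∧
      ∃ e : G ≃ kˣ × K₁ × K₂,
        (∀ g h : G,
          e (g * h) =
            ((e g).1 * (e h).1 * c ((e g).2.1 : K) ((e h).2.2 : K),
              (e g).2.1 * (e h).2.1, (e g).2.2 * (e h).2.2)) ∧
        (∀ α : kˣ, e (ι α) = (α, 1, 1)) ∧
        (∀ g : G, π g = ((e g).2.1 : K) * ((e g).2.2 : K)) := by
  classical
  -- centrality of the image of ι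
  have hcent : ∀ (α : kˣ) (g : G), Commute (ι α) g := by
    intro α g
    have hα : ι α ∈ Subgroup.center G := by rw [← hnondeg]; exact ⟨α, rfl⟩
    exact (Subgroup.mem_center_iff.mp hα g).symm
  have hπι : ∀ α : kˣ, π (ι α) = 1 := by
    intro α
    have h1 : ι α ∈ π.ker := by rw [hexact]; exact ⟨α, rfl⟩
    exact MonoidHom.mem_ker.mp h1
  -- commutator identities
  have hmul_left : ∀ a a' b : G, ⁅a * a', b⁆ = ⁅a, b⁆ * ⁅a', b⁆ := by
    intro a a' b
    have h1 : ⁅a * a', b⁆ = a * ⁅a', b⁆ * a⁻¹ * ⁅a, b⁆ := by group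
    have h2 : a * ⁅a', b⁆ * a⁻¹ = ⁅a', b⁆ := by
      rw [← hc a' b, ← (hcent (c (π a') (π b)) a).eq, mul_inv_cancel_right]
    have h3 : ⁅a', b⁆ * ⁅a, b⁆ = ⁅a, b⁆ * ⁅a', b⁆ := by
      rw [← hc a' b, ← hc a b, ← map_mul, ← map_mul, mul_comm (c (π a') (π b))]
    rw [h1, h2, h3]
  have hmul_right : ∀ a b b' : G, ⁅a, b * b'⁆ = ⁅a, b⁆ * ⁅a, b'⁆ := by
    intro a b b'
    have h1 : ⁅a, b * b'⁆ = ⁅a, b⁆ * (b * ⁅a, b'⁆ * b⁻¹) := by group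
    have h2 : b * ⁅a, b'⁆ * b⁻¹ = ⁅a, b'⁆ := by
      rw [← hc a b', ← (hcent (c (π a) (π b')) b).eq, mul_inv_cancel_right]
    rw [h1, h2]
  -- bilinearity and alternation of c
  have hl : ∀ x y z : K, c (x * y) z = c x z * c y z := by
    intro x y z
    obtain ⟨a, rfl⟩ := hsurj x
    obtain ⟨a', rfl⟩ := hsurj y
    obtain ⟨b, rfl⟩ := hsurj z
    apply hinj
    rw [map_mul, hc a b, hc a' b, ← hmul_left, ← hc (a * a') b, map_mul π]
  have hr : ∀ x y z : K, c x (y * z) = c x y * c x z := by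
    intro x y z
    obtain ⟨a, rfl⟩ := hsurj x
    obtain ⟨b, rfl⟩ := hsurj y
    obtain ⟨b', rfl⟩ := hsurj z
    apply hinj
    rw [map_mul, hc a b, hc a b', ← hmul_right, ← hc a (b * b'), map_mul π]
  have halt : ∀ x : K, c x x = 1 := by
    intro x
    obtain ⟨a, rfl⟩ := hsurj x
    apply hinj
    rw [hc a a, commutatorElement_self, map_one]
  have hnd : ∀ x : K, (∀ y, c x y = 1) → x = 1 := by
    intro x hx
    obtain ⟨a, rfl⟩ := hsurj x
    have hce : a ∈ Subgroup.center G := by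
      rw [Subgroup.mem_center_iff]
      intro g
      have h1 : ι (c (π a) (π g)) = ⁅a, g⁆ := hc a g
      rw [hx (π g), map_one] at h1
      exact (commutatorElement_eq_one_iff_commute.mp h1.symm).symm.eq
    rw [← hnondeg] at hce
    obtain ⟨α, hα⟩ := hce
    rw [← hα, hπι]
  -- symplectic decomposition
  obtain ⟨K₁, K₂, hKc, hK₁, hK₂⟩ :=
    symp_decomp (Nat.card K) K c le_rfl hl hr halt hnd
  have hmemsup : ∀ u : K, u ∈ K₁ ⊔ K₂ := by
    intro u
    rw [codisjoint_iff.mp hKc.codisjoint]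
    exact Subgroup.mem_top u
  have hnd₁ : ∀ x ∈ K₁, (∀ y ∈ K₂, c x y = 1) → x = 1 := by
    intro x hx hxy
    apply hnd
    intro u
    obtain ⟨y₁, hy₁, y₂, hy₂, rfl⟩ := Subgroup.mem_sup.mp (hmemsup u)
    rw [hr, hK₁ x hx y₁ hy₁, hxy y₂ hy₂, one_mul]
  have hnd₂ : ∀ y ∈ K₂, (∀ x ∈ K₁, c x y = 1) → y = 1 := by
    intro y hy hxy
    apply hnd
    intro u
    obtain ⟨y₁, hy₁, y₂, hy₂, rfl⟩ := Subgroup.mem_sup.mp (hmemsup u)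
    rw [hr, c_antisymm hl hr halt y₁ y, hxy y₁ hy₁, inv_one, hK₂ y hy y₂ hy₂, one_mul]
  -- sections over K₁ and K₂
  obtain ⟨s₁, hs₁⟩ := exists_hom_section ι π hsurj hexact hcent c hc K₁ hK₁
  obtain ⟨s₂, hs₂⟩ := exists_hom_section ι π hsurj hexact hcent c hc K₂ hK₂
  -- the comparison map
  set E : kˣ × K₁ × K₂ → G := fun p => ι p.1 * (s₂ p.2.2 * s₁ p.2.1) with hEdef
  have hπE : ∀ p, π (E p) = ((p.2.2 : K)) * ((p.2.1 : K)) := by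
    intro p
    show π (ι p.1 * (s₂ p.2.2 * s₁ p.2.1)) = _
    rw [map_mul, map_mul, hπι, one_mul, hs₁, hs₂]
  have hEmul : ∀ p q : kˣ × K₁ × K₂,
      E p * E q = E (p.1 * q.1 * c ((p.2.1 : K)) ((q.2.2 : K)),
        p.2.1 * q.2.1, p.2.2 * q.2.2) := by
    rintro ⟨pα, p₁, p₂⟩ ⟨qα, q₁, q₂⟩
    show ι pα * (s₂ p₂ * s₁ p₁) * (ι qα * (s₂ q₂ * s₁ q₁))
      = ι (pα * qα * c ((p₁ : K)) ((q₂ : K))) * (s₂ (p₂ * q₂) * s₁ (p₁ * q₁))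
    have hkey : s₁ p₁ * s₂ q₂ = ι (c ((p₁ : K)) ((q₂ : K))) * (s₂ q₂ * s₁ p₁) := by
      have h1 := hc (s₁ p₁) (s₂ q₂)
      rw [hs₁, hs₂] at h1
      rw [h1]
      group
    calc ι pα * (s₂ p₂ * s₁ p₁) * (ι qα * (s₂ q₂ * s₁ q₁))
        = ι pα * ((s₂ p₂ * s₁ p₁) * ι qα) * (s₂ q₂ * s₁ q₁) := by group
      _ = ι pα * (ι qα * (s₂ p₂ * s₁ p₁)) * (s₂ q₂ * s₁ q₁) := by
          rw [(hcent qα (s₂ p₂ * s₁ p₁)).eq]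
      _ = ι pα * ι qα * (s₂ p₂ * (s₁ p₁ * s₂ q₂) * s₁ q₁) := by group
      _ = ι pα * ι qα
            * (s₂ p₂ * (ι (c ((p₁ : K)) ((q₂ : K))) * (s₂ q₂ * s₁ p₁)) * s₁ q₁) := by
          rw [hkey]
      _ = ι pα * ι qα
            * ((s₂ p₂ * ι (c ((p₁ : K)) ((q₂ : K)))) * ((s₂ q₂ * s₁ p₁) * s₁ q₁)) := by
          group
      _ = ι pα * ι qα
            * ((ι (c ((p₁ : K)) ((q₂ : K))) * s₂ p₂) * ((s₂ q₂ * s₁ p₁) * s₁ q₁)) := by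
          rw [(hcent (c ((p₁ : K)) ((q₂ : K))) (s₂ p₂)).eq]
      _ = ι (pα * qα * c ((p₁ : K)) ((q₂ : K))) * (s₂ (p₂ * q₂) * s₁ (p₁ * q₁)) := by
          rw [map_mul ι, map_mul ι, map_mul s₂, map_mul s₁]
          group
  have hEinj : Function.Injective E := by
    rintro ⟨pα, p₁, p₂⟩ ⟨qα, q₁, q₂⟩ h
    have hπ := congrArg π h
    rw [hπE, hπE] at hπ
    -- hπ : ↑p₂ * ↑p₁ = ↑q₂ * ↑q₁
    have hz : ((p₁ : K)) / (q₁ : K) = ((q₂ : K)) / (p₂ : K) :=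
      div_eq_div_iff_mul_eq_mul.mpr (by rw [mul_comm ((p₁ : K))]; rw [hπ, mul_comm])
    have hmem1 : ((p₁ : K)) / (q₁ : K) ∈ K₁ := div_mem p₁.2 q₁.2
    have hmem2 : ((p₁ : K)) / (q₁ : K) ∈ K₂ := hz ▸ div_mem q₂.2 p₂.2
    have h1 : ((p₁ : K)) / (q₁ : K) = 1 :=
      Subgroup.disjoint_def.mp hKc.disjoint hmem1 hmem2
    have hp₁ : p₁ = q₁ := Subtype.coe_injective (div_eq_one.mp h1)
    have h2 : ((q₂ : K)) / (p₂ : K) = 1 := by rw [← hz]; exact h1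
    have hp₂ : p₂ = q₂ := (Subtype.coe_injective (div_eq_one.mp h2)).symm
    subst hp₁; subst hp₂
    have h3 : ι pα = ι qα := by
      have := h
      simp only [E] at this
      exact mul_right_cancel this
    rw [hinj h3]
  have hEsurj : Function.Surjective E := by
    intro gg
    obtain ⟨u, hu₁, w, hw₂, huw⟩ := Subgroup.mem_sup.mp (hmemsup (π gg))
    have hker2 : gg * (s₂ ⟨w, hw₂⟩ * s₁ ⟨u, hu₁⟩)⁻¹ ∈ π.ker := by
      rw [MonoidHom.mem_ker, map_mul, map_inv, map_mul, hs₁, hs₂]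
      show π gg * (w * u)⁻¹ = 1
      rw [← huw, mul_comm u w, mul_inv_cancel]
    rw [hexact] at hker2
    obtain ⟨αg, hαg⟩ := hker2
    refine ⟨(αg, ⟨u, hu₁⟩, ⟨w, hw₂⟩), ?_⟩
    show ι αg * (s₂ ⟨w, hw₂⟩ * s₁ ⟨u, hu₁⟩) = gg
    rw [hαg]
    group
  have hbij : Function.Bijective E := ⟨hEinj, hEsurj⟩
  set e0 := Equiv.ofBijective E hbij with he0
  have hsymmE : ∀ p, e0.symm (E p) = p := fun p => e0.symm_apply_apply p
  have hEsymm : ∀ g : G, E (e0.symm g) = g := fun g => e0.apply_symm_apply g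
  refine ⟨K₁, K₂, hKc, hK₁, hK₂, hnd₁, hnd₂, e0.symm, ?_, ?_, ?_⟩
  · intro g h
    calc e0.symm (g * h) = e0.symm (E (e0.symm g) * E (e0.symm h)) := by
          rw [hEsymm, hEsymm]
      _ = e0.symm (E ((e0.symm g).1 * (e0.symm h).1
            * c (((e0.symm g).2.1 : K)) (((e0.symm h).2.2 : K)),
            (e0.symm g).2.1 * (e0.symm h).2.1, (e0.symm g).2.2 * (e0.symm h).2.2)) := by
          rw [hEmul]
      _ = _ := hsymmE _
  · intro α
    have h1 : E (α, 1, 1) = ι α := by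
      show ι α * (s₂ 1 * s₁ 1) = ι α
      rw [map_one, map_one, mul_one, mul_one]
    rw [← h1]
    exact hsymmE _
  · intro g
    conv_lhs => rw [← hEsymm g]
    rw [hπE]
    exact mul_comm _ _
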